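/- Under the hypotheses of the near-identity composition lemma (V nonempty open in ℂⁿ, 0 < ε < δ/4, α, β, γ : V(δ) → ℂⁿ injective holomorphic with sup-distance to the identity less than ε on V(δ)), write α = Id + a, β = Id + b, γ = Id + c on V(δ) and γ̃ = β⁻¹∘γ∘α = Id + c̃ on V. If additionally c = b − a on V, then ‖c̃‖_V ≤ M₂·ε²/δ, where M₂ ≥ 1 depends only on n. -/

import Mathlib

open Set Metric

/-- The open `r`-neighborhood of a set `M ⊆ ℂⁿ`. -/
def nbhd {n : ℕ} (M : Set (EuclideanSpace ℂ (Fin n))) (r : ℝ) :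
    Set (EuclideanSpace ℂ (Fin n)) :=
  {z | ∃ x ∈ M, ‖x - z‖ < r}

open Asymptotics Filter

section aux

variable {E F : Type*} [NormedAddCommGroup E] [NormedSpace ℂ E]
  [NormedAddCommGroup F] [NormedSpace ℂ F]

/-- Cauchy estimate for the derivative of a bounded holomorphic map. -/
lemma cauchy_fderiv_bound {f : E → F} {U : Set E} (hU : IsOpen U)
    (hf : DifferentiableOn ℂ f U) {C : ℝ} (hC : ∀ x ∈ U, ‖f x‖ ≤ C)
    {x₀ : E} {r : ℝ} (hr : 0 < r) (hball : Metric.ball x₀ r ⊆ U) :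
    ‖fderiv ℂ f x₀‖ ≤ C / r := by
  have hx₀ : x₀ ∈ U := hball (mem_ball_self hr)
  have hC0 : 0 ≤ C := le_trans (norm_nonneg _) (hC x₀ hx₀)
  refine ContinuousLinearMap.opNorm_le_bound _ (div_nonneg hC0 hr.le) (fun v => ?_)
  rcases eq_or_ne v 0 with rfl | hv
  · simp
  have hv' : 0 < ‖v‖ := norm_pos_iff.mpr hv
  set R : ℝ := r / ‖v‖ with hR
  have hRpos : 0 < R := div_pos hr hv'
  set g : ℂ → F := fun t => f (x₀ + t • v) with hg
  have hmem : ∀ t : ℂ, ‖t‖ < R → x₀ + t • v ∈ Metric.ball x₀ r := by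
    intro t ht
    rw [mem_ball, dist_eq_norm]
    have : ‖x₀ + t • v - x₀‖ = ‖t‖ * ‖v‖ := by
      rw [add_sub_cancel_left, norm_smul]
    rw [this]
    calc ‖t‖ * ‖v‖ < R * ‖v‖ := by
          exact mul_lt_mul_of_pos_right ht hv'
      _ = r := div_mul_cancel₀ r hv'.ne'
  have gdiff : DifferentiableOn ℂ g (Metric.ball (0:ℂ) R) := by
    intro t ht
    rw [mem_ball, dist_zero_right] at ht
    have h1 : DifferentiableAt ℂ f (x₀ + t • v) :=
      hf.differentiableAt (hU.mem_nhds (hball (hmem t ht)))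
    have h2 : DifferentiableAt ℂ (fun s : ℂ => x₀ + s • v) t :=
      (differentiableAt_id.smul_const v).const_add x₀
    exact (h1.comp t h2).differentiableWithinAt
  have hderiv : HasDerivAt g (fderiv ℂ f x₀ v) 0 := by
    have h1 : HasFDerivAt f (fderiv ℂ f x₀) x₀ :=
      (hf.differentiableAt (hU.mem_nhds hx₀)).hasFDerivAt
    have h2 : HasDerivAt (fun s : ℂ => x₀ + s • v) v 0 := by
      simpa using ((hasDerivAt_id (0:ℂ)).smul_const v).const_add x₀
    have h1' : HasFDerivAt f (fderiv ℂ f x₀) (x₀ + (0:ℂ) • v) := by simpa using h1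
    exact h1'.comp_hasDerivAt 0 h2
  have key : ∀ ρ : ℝ, 0 < ρ → ρ < R → ‖fderiv ℂ f x₀ v‖ ≤ C / ρ := by
    intro ρ hρ hρR
    rw [← hderiv.deriv]
    refine Complex.norm_deriv_le_of_forall_mem_sphere_norm_le hρ ?_ ?_
    · refine DifferentiableOn.diffContOnCl ?_
      rw [closure_ball (0:ℂ) hρ.ne']
      exact gdiff.mono (closedBall_subset_ball hρR)
    · intro z hz
      rw [mem_sphere_zero_iff_norm] at hz
      exact hC _ (hball (hmem z (hz ▸ hρR)))
  have hmain : ‖fderiv ℂ f x₀ v‖ * R ≤ C := by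
    have hev : ∀ᶠ ρ in nhdsWithin R (Set.Iio R), ‖fderiv ℂ f x₀ v‖ * ρ ≤ C := by
      filter_upwards [Ioo_mem_nhdsLT_of_mem (Set.mem_Ioc.mpr ⟨hRpos, le_refl R⟩)]
        with ρ hρ
      have := key ρ hρ.1 hρ.2
      rw [le_div_iff₀ hρ.1] at this
      exact this
    have htend : Filter.Tendsto (fun ρ : ℝ => ‖fderiv ℂ f x₀ v‖ * ρ)
        (nhdsWithin R (Set.Iio R)) (nhds (‖fderiv ℂ f x₀ v‖ * R)) :=
      ((continuous_const.mul continuous_id).tendsto R).mono_left nhdsWithin_le_nhds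
    exact le_of_tendsto htend hev
  rw [hR] at hmain
  have h2 : ‖fderiv ℂ f x₀ v‖ ≤ C / (r / ‖v‖) :=
    (le_div_iff₀ (div_pos hr hv')).mpr hmain
  rw [div_div_eq_mul_div] at h2
  calc ‖fderiv ℂ f x₀ v‖ ≤ C * ‖v‖ / r := h2
    _ = C / r * ‖v‖ := by ring

/-- Lipschitz estimate for bounded holomorphic maps on a convex set at positive
distance from the boundary. -/
lemma holo_lip {f : E → F} {U : Set E} (hU : IsOpen U)
    (hf : DifferentiableOn ℂ f U) {C : ℝ} (hC : ∀ x ∈ U, ‖f x‖ ≤ C)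
    {s : Set E} (hconv : Convex ℝ s) {r : ℝ} (hr : 0 < r)
    (hs : ∀ x ∈ s, Metric.ball x r ⊆ U) {x y : E} (hx : x ∈ s) (hy : y ∈ s) :
    ‖f x - f y‖ ≤ C / r * ‖x - y‖ := by
  refine Convex.norm_image_sub_le_of_norm_fderiv_le (𝕜 := ℂ) (fun z hz => ?_)
    (fun z hz => ?_) hconv hy hx
  · exact hf.differentiableAt (hU.mem_nhds (hs z hz (mem_ball_self hr)))
  · exact cauchy_fderiv_bound hU hf hC hr (hs z hz)

end aux

set_option maxHeartbeats 1000000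

/-- Quadratic estimate in the splitting iteration: under the hypotheses of the
near-identity composition lemma, if additionally `c = b - a` on `V`, then the map
`γ̃ = β⁻¹ ∘ γ ∘ α = Id + c̃` satisfies `‖c̃‖_V ≤ M₂ ε²/δ` with `M₂ ≥ 1` depending
only on `n`. -/
theorem near_identity_composition_quadratic (n : ℕ) (hn : 1 ≤ n) :
    ∃ M₂ : ℝ, 1 ≤ M₂ ∧
      ∀ (V : Set (EuclideanSpace ℂ (Fin n))) (ε δ : ℝ)
        (α β γ : EuclideanSpace ℂ (Fin n) → EuclideanSpace ℂ (Fin n)),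
        V.Nonempty → IsOpen V → 0 < ε → ε < δ / 4 →
        Set.InjOn α (nbhd V δ) → DifferentiableOn ℂ α (nbhd V δ) →
        Set.InjOn β (nbhd V δ) → DifferentiableOn ℂ β (nbhd V δ) →
        Set.InjOn γ (nbhd V δ) → DifferentiableOn ℂ γ (nbhd V δ) →
        (∀ z ∈ nbhd V δ, ‖α z - z‖ < ε) →
        (∀ z ∈ nbhd V δ, ‖β z - z‖ < ε) →
        (∀ z ∈ nbhd V δ, ‖γ z - z‖ < ε) →
        (∀ z ∈ V, γ z - z = (β z - z) - (α z - z)) →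
        ∃ γt : EuclideanSpace ℂ (Fin n) → EuclideanSpace ℂ (Fin n),
          (∀ z ∈ V, α z ∈ nbhd V δ ∧ γt z ∈ nbhd V δ ∧ β (γt z) = γ (α z)) ∧
          Set.InjOn γt V ∧ DifferentiableOn ℂ γt V ∧
          ∀ z ∈ V, ‖γt z - z‖ ≤ M₂ * ε ^ 2 / δ := by
  refine ⟨16, by norm_num, ?_⟩
  intro V ε δ α β γ hVne hVopen hε hεδ hαi hαd hβi hβd hγi hγd hαε hβε hγε hsplit
  have hδ : 0 < δ := by linarith
  set U := nbhd V δ with hUdef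
  have hballU : ∀ z ∈ V, Metric.ball z δ ⊆ U := by
    intro z hz w hw
    exact ⟨z, hz, by rw [norm_sub_rev, ← dist_eq_norm]; exact mem_ball.mp hw⟩
  have hVU : V ⊆ U := fun z hz => hballU z hz (mem_ball_self hδ)
  have hUopen : IsOpen U := by
    have hUeq : U = ⋃ x ∈ V, Metric.ball x δ := by
      ext w
      simp only [hUdef, nbhd, mem_setOf_eq, mem_iUnion, mem_ball, exists_prop]
      constructor
      · rintro ⟨x, hx, h⟩
        exact ⟨x, hx, by rw [dist_eq_norm, ← norm_sub_rev]; exact h⟩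
      · rintro ⟨x, hx, h⟩
        exact ⟨x, hx, by rw [norm_sub_rev, ← dist_eq_norm]; exact h⟩
    rw [hUeq]
    exact isOpen_biUnion (fun _ _ => isOpen_ball)
  -- the three "small" maps
  have had : DifferentiableOn ℂ (fun x => α x - x) U := hαd.sub differentiableOn_id
  have hbd : DifferentiableOn ℂ (fun x => β x - x) U := hβd.sub differentiableOn_id
  have hcd : DifferentiableOn ℂ (fun x => γ x - x) U := hγd.sub differentiableOn_id
  have haC : ∀ x ∈ U, ‖α x - x‖ ≤ ε := fun x hx => (hαε x hx).le
  have hbC : ∀ x ∈ U, ‖β x - x‖ ≤ ε := fun x hx => (hβε x hx).le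
  have hcC : ∀ x ∈ U, ‖γ x - x‖ ≤ ε := fun x hx => (hγε x hx).le
  -- generic Lipschitz estimate on closed balls centered in V
  have hlip : ∀ g : EuclideanSpace ℂ (Fin n) → EuclideanSpace ℂ (Fin n),
      DifferentiableOn ℂ g U → (∀ x ∈ U, ‖g x‖ ≤ ε) →
      ∀ z₀ ∈ V, ∀ ρ : ℝ, 0 ≤ ρ → ρ < δ →
      ∀ x y, x ∈ closedBall z₀ ρ → y ∈ closedBall z₀ ρ →
      ‖g x - g y‖ ≤ ε / (δ - ρ) * ‖x - y‖ := by
    intro g hgd hgC z₀ hz₀ ρ hρ0 hρδ x y hx hy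
    refine holo_lip hUopen hgd hgC (convex_closedBall z₀ ρ) (by linarith) ?_ hx hy
    intro w hw p hp
    apply hballU z₀ hz₀
    rw [mem_ball]
    calc dist p z₀ ≤ dist p w + dist w z₀ := dist_triangle _ _ _
      _ < (δ - ρ) + ρ := by
          exact add_lt_add_of_lt_of_le (mem_ball.mp hp) (mem_closedBall.mp hw)
      _ = δ := by ring
  -- existence of the lift by the Banach fixed point theorem
  have hαzmem : ∀ z ∈ V, α z ∈ U := by
    intro z hz
    apply hballU z hz
    rw [mem_ball, dist_eq_norm]
    exact lt_trans (hαε z (hVU hz)) (by linarith)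
  have hkey : ∀ z ∈ V, ∃ w ∈ closedBall z (3*ε), β w = γ (α z) := by
    intro z hz
    have hzU : z ∈ U := hVU hz
    have hαzU : α z ∈ U := hαzmem z hz
    set y := γ (α z) with hy
    have hyz : ‖y - z‖ < 2*ε := by
      calc ‖y - z‖ = ‖(γ (α z) - α z) + (α z - z)‖ := by rw [hy]; congr 1; abel
        _ ≤ ‖γ (α z) - α z‖ + ‖α z - z‖ := norm_add_le _ _
        _ < ε + ε := add_lt_add (hγε _ hαzU) (hαε _ hzU)
        _ = 2*ε := by ring
    set T : EuclideanSpace ℂ (Fin n) → EuclideanSpace ℂ (Fin n) :=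
      fun w => y - β w + w with hT
    have hcbU : closedBall z (3*ε) ⊆ U := by
      intro w hw
      apply hballU z hz
      rw [mem_ball]
      exact lt_of_le_of_lt (mem_closedBall.mp hw) (by linarith)
    have hTmaps : MapsTo T (closedBall z (3*ε)) (closedBall z (3*ε)) := by
      intro w hw
      have hwU : w ∈ U := hcbU hw
      rw [mem_closedBall, dist_eq_norm]
      have hTw : T w - z = (y - z) - (β w - w) := by show y - β w + w - z = _; abel
      rw [hTw]
      calc ‖(y - z) - (β w - w)‖ ≤ ‖y - z‖ + ‖β w - w‖ := norm_sub_le _ _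
        _ ≤ 2*ε + ε := add_le_add hyz.le (hbC w hwU)
        _ = 3*ε := by ring
    set L : ℝ := ε / (δ - 3*ε) with hLdef
    have hL0 : 0 ≤ L := div_nonneg hε.le (by linarith)
    have hL1 : L < 1 := (div_lt_one (by linarith)).mpr (by linarith)
    have hTlip : LipschitzOnWith (Real.toNNReal L) T (closedBall z (3*ε)) := by
      rw [lipschitzOnWith_iff_dist_le_mul]
      intro w1 h1 w2 h2
      rw [dist_eq_norm, dist_eq_norm, Real.coe_toNNReal L hL0]
      have hTT : T w1 - T w2 = (β w2 - w2) - (β w1 - w1) := by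
        show (y - β w1 + w1) - (y - β w2 + w2) = _; abel
      rw [hTT]
      have := hlip (fun x => β x - x) hbd hbC z hz (3*ε) (by positivity) (by linarith)
        w2 w1 h2 h1
      rwa [norm_sub_rev w2 w1] at this
    have hcontr : ContractingWith (Real.toNNReal L) (hTmaps.restrict T _ _) :=
      ⟨Real.toNNReal_lt_one.mpr hL1, hTlip.to_restrict⟩
    obtain ⟨w, hwmem, hwfix, -⟩ := hcontr.exists_fixedPoint' Metric.isClosed_closedBall.isComplete
      hTmaps (mem_closedBall_self (by positivity)) (edist_ne_top _ _)
    refine ⟨w, hwmem, ?_⟩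
    have hfix : y - β w + w = w := hwfix
    have : y - β w = 0 := by
      have := hfix
      rwa [add_eq_right] at this
    rw [hy] at this
    have := sub_eq_zero.mp this
    exact this.symm
  classical
  -- define the lift
  set γt : EuclideanSpace ℂ (Fin n) → EuclideanSpace ℂ (Fin n) :=
    fun z => if h : z ∈ V then (hkey z h).choose else z with hγtdef
  have hγt : ∀ z (h : z ∈ V), γt z ∈ closedBall z (3*ε) ∧ β (γt z) = γ (α z) := by
    intro z h
    have hspec := (hkey z h).choose_spec
    simp only [hγtdef, dif_pos h]
    exact hspec
  have hγtU : ∀ z ∈ V, γt z ∈ U := by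
    intro z hz
    apply hballU z hz
    rw [mem_ball]
    exact lt_of_le_of_lt (mem_closedBall.mp (hγt z hz).1) (by linarith)
  -- global Lipschitz constant on balls of radius 3ε
  set L : ℝ := ε / (δ - 3*ε) with hLdef
  have hL0 : 0 ≤ L := div_nonneg hε.le (by linarith)
  have hL4 : L ≤ 4*ε/δ := by
    rw [hLdef, div_le_div_iff₀ (by linarith) hδ]
    nlinarith
  -- the quadratic estimate
  have hest : ∀ z ∈ V, ‖γt z - z‖ ≤ 16 * ε ^ 2 / δ := by
    intro z hz
    have hzU := hVU hz
    have hαzU := hαzmem z hz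
    have hβγ := (hγt z hz).2
    have hαzcb : α z ∈ closedBall z (3*ε) := by
      rw [mem_closedBall, dist_eq_norm]
      exact le_trans (hαε z hzU).le (by linarith)
    have hid : γt z - z = ((γ (α z) - α z) - (γ z - z)) +
        ((β z - z) - (β (γt z) - γt z)) := by
      rw [hsplit z hz, ← hβγ]
      abel
    have hb1 : ‖(γ (α z) - α z) - (γ z - z)‖ ≤ L * ‖α z - z‖ :=
      hlip (fun x => γ x - x) hcd hcC z hz (3*ε) (by positivity) (by linarith)
        (α z) z hαzcb (mem_closedBall_self (by positivity))
    have hb2 : ‖(β z - z) - (β (γt z) - γt z)‖ ≤ L * ‖z - γt z‖ :=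
      hlip (fun x => β x - x) hbd hbC z hz (3*ε) (by positivity) (by linarith)
        z (γt z) (mem_closedBall_self (by positivity)) (hγt z hz).1
    have hzγt : ‖z - γt z‖ ≤ 3*ε := by
      rw [norm_sub_rev, ← dist_eq_norm]
      exact mem_closedBall.mp (hγt z hz).1
    calc ‖γt z - z‖ ≤ ‖(γ (α z) - α z) - (γ z - z)‖ +
          ‖(β z - z) - (β (γt z) - γt z)‖ := by rw [hid]; exact norm_add_le _ _
      _ ≤ L * ‖α z - z‖ + L * ‖z - γt z‖ := add_le_add hb1 hb2
      _ ≤ L * ε + L * (3*ε) := add_le_add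
          (mul_le_mul_of_nonneg_left (hαε z hzU).le hL0)
          (mul_le_mul_of_nonneg_left hzγt hL0)
      _ = 4*ε*L := by ring
      _ ≤ 4*ε*(4*ε/δ) := mul_le_mul_of_nonneg_left hL4 (by positivity)
      _ = 16 * ε ^ 2 / δ := by ring
  -- injectivity
  have hinj : Set.InjOn γt V := by
    intro z1 h1 z2 h2 heq
    have hβeq : γ (α z1) = γ (α z2) := by
      rw [← (hγt z1 h1).2, ← (hγt z2 h2).2, heq]
    exact hαi (hVU h1) (hVU h2) (hγi (hαzmem z1 h1) (hαzmem z2 h2) hβeq)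
  -- differentiability
  have hdiff : DifferentiableOn ℂ γt V := by
    intro z₀ hz₀
    suffices h : DifferentiableAt ℂ γt z₀ from h.differentiableWithinAt
    have hz₀U := hVU hz₀
    set w₀ := γt z₀ with hw₀def
    have hw₀cb : w₀ ∈ closedBall z₀ (3*ε) := (hγt z₀ hz₀).1
    have hw₀U : w₀ ∈ U := hγtU z₀ hz₀
    set ρ : ℝ := (δ - 4*ε)/2 with hρdef
    have hρ : 0 < ρ := by rw [hρdef]; linarith
    obtain ⟨ρ', hρ'pos, hρ'V⟩ := Metric.isOpen_iff.mp hVopen z₀ hz₀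
    set r₀ : ℝ := min ρ ρ' with hr₀def
    have hr₀ : 0 < r₀ := lt_min hρ hρ'pos
    have hr₀ρ : r₀ ≤ ρ := min_le_left _ _
    have hr₀V : Metric.ball z₀ r₀ ⊆ V :=
      fun p hp => hρ'V (ball_subset_ball (min_le_right _ _) hp)
    have hKδ : 3*ε + ρ < δ := by rw [hρdef]; linarith
    set L' : ℝ := ε / (δ - (3*ε + ρ)) with hL'def
    have hr₁pos : 0 < δ - (3*ε + ρ) := by linarith
    have hL'0 : 0 ≤ L' := div_nonneg hε.le hr₁pos.le
    have hL'1 : L' < 1 := by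
      rw [hL'def, div_lt_one hr₁pos, hρdef]; linarith
    have hlipK : ∀ g : EuclideanSpace ℂ (Fin n) → EuclideanSpace ℂ (Fin n),
        DifferentiableOn ℂ g U → (∀ x ∈ U, ‖g x‖ ≤ ε) →
        ∀ x y, x ∈ closedBall z₀ (3*ε + ρ) → y ∈ closedBall z₀ (3*ε + ρ) →
        ‖g x - g y‖ ≤ L' * ‖x - y‖ :=
      fun g hgd hgC x y hx hy =>
        hlip g hgd hgC z₀ hz₀ (3*ε + ρ) (by positivity) hKδ x y hx hy
    have hz₀K : z₀ ∈ closedBall z₀ (3*ε + ρ) := mem_closedBall_self (by positivity)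
    have hαz₀K : α z₀ ∈ closedBall z₀ (3*ε + ρ) := by
      rw [mem_closedBall, dist_eq_norm]
      exact le_trans (hαε z₀ hz₀U).le (by linarith)
    have hw₀K : w₀ ∈ closedBall z₀ (3*ε + ρ) :=
      closedBall_subset_closedBall (by linarith) hw₀cb
    have hmemK : ∀ z ∈ Metric.ball z₀ r₀,
        z ∈ closedBall z₀ (3*ε + ρ) ∧ α z ∈ closedBall z₀ (3*ε + ρ) ∧
        γt z ∈ closedBall z₀ (3*ε + ρ) := by
      intro z hz
      have hzd : dist z z₀ < r₀ := mem_ball.mp hz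
      have hzV : z ∈ V := hr₀V hz
      refine ⟨?_, ?_, ?_⟩
      · exact mem_closedBall.mpr (by linarith)
      · rw [mem_closedBall]
        calc dist (α z) z₀ ≤ dist (α z) z + dist z z₀ := dist_triangle _ _ _
          _ ≤ ε + r₀ := add_le_add (by rw [dist_eq_norm]; exact (hαε z (hVU hzV)).le) hzd.le
          _ ≤ 3*ε + ρ := by linarith
      · rw [mem_closedBall]
        calc dist (γt z) z₀ ≤ dist (γt z) z + dist z z₀ := dist_triangle _ _ _
          _ ≤ 3*ε + r₀ := add_le_add (mem_closedBall.mp (hγt z hzV).1) hzd.le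
          _ ≤ 3*ε + ρ := by linarith
    have he₀ : β w₀ = γ (α z₀) := by rw [hw₀def]; exact (hγt z₀ hz₀).2
    -- local Lipschitz bound for γt near z₀
    have hLipγt : ∀ z ∈ Metric.ball z₀ r₀, ‖γt z - w₀‖ ≤ (4/(1-L')) * ‖z - z₀‖ := by
      intro z hz
      obtain ⟨hzK, hαzK, hγtzK⟩ := hmemK z hz
      have hzV : z ∈ V := hr₀V hz
      have h1 : ‖α z - α z₀‖ ≤ (1+L') * ‖z - z₀‖ := by
        have hidd : α z - α z₀ = ((α z - z) - (α z₀ - z₀)) + (z - z₀) := by abel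
        rw [hidd]
        calc ‖((α z - z) - (α z₀ - z₀)) + (z - z₀)‖
            ≤ ‖(α z - z) - (α z₀ - z₀)‖ + ‖z - z₀‖ := norm_add_le _ _
          _ ≤ L' * ‖z - z₀‖ + ‖z - z₀‖ :=
              add_le_add (hlipK (fun x => α x - x) had haC z z₀ hzK hz₀K) le_rfl
          _ = (1+L') * ‖z - z₀‖ := by ring
      have h2 : ‖γ (α z) - γ (α z₀)‖ ≤ (1+L') * ‖α z - α z₀‖ := by
        have hidd : γ (α z) - γ (α z₀) =
            ((γ (α z) - α z) - (γ (α z₀) - α z₀)) + (α z - α z₀) := by abel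
        rw [hidd]
        calc ‖((γ (α z) - α z) - (γ (α z₀) - α z₀)) + (α z - α z₀)‖
            ≤ ‖(γ (α z) - α z) - (γ (α z₀) - α z₀)‖ + ‖α z - α z₀‖ := norm_add_le _ _
          _ ≤ L' * ‖α z - α z₀‖ + ‖α z - α z₀‖ :=
              add_le_add (hlipK (fun x => γ x - x) hcd hcC (α z) (α z₀) hαzK hαz₀K) le_rfl
          _ = (1+L') * ‖α z - α z₀‖ := by ring
      have h3 : ‖γt z - w₀‖ ≤ ‖γ (α z) - γ (α z₀)‖ + L' * ‖γt z - w₀‖ := by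
        have he : β (γt z) - β w₀ = γ (α z) - γ (α z₀) := by
          rw [(hγt z hzV).2, he₀]
        calc ‖γt z - w₀‖
            = ‖(γ (α z) - γ (α z₀)) - ((β (γt z) - γt z) - (β w₀ - w₀))‖ := by
              rw [← he]; congr 1; abel
          _ ≤ ‖γ (α z) - γ (α z₀)‖ + ‖(β (γt z) - γt z) - (β w₀ - w₀)‖ := norm_sub_le _ _
          _ ≤ ‖γ (α z) - γ (α z₀)‖ + L' * ‖γt z - w₀‖ :=
              add_le_add le_rfl (hlipK (fun x => β x - x) hbd hbC (γt z) w₀ hγtzK hw₀K)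
      have h21 : ‖γ (α z) - γ (α z₀)‖ ≤ (1+L') * ((1+L') * ‖z - z₀‖) :=
        h2.trans (mul_le_mul_of_nonneg_left h1 (by linarith))
      have h22 : (1+L') * ((1+L') * ‖z - z₀‖) ≤ 4 * ‖z - z₀‖ := by
        nlinarith [mul_nonneg (norm_nonneg (z - z₀))
          (mul_nonneg (by linarith : (0:ℝ) ≤ 1 - L') (by linarith : (0:ℝ) ≤ 3 + L'))]
      have h4 : (1 - L') * ‖γt z - w₀‖ ≤ 4 * ‖z - z₀‖ := by nlinarith
      rw [div_mul_eq_mul_div, le_div_iff₀ (by linarith : (0:ℝ) < 1 - L'), mul_comm]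
      exact h4
    -- continuity at z₀
    have hO : (fun z => γt z - w₀) =O[nhds z₀] (fun z => z - z₀) := by
      rw [Asymptotics.isBigO_iff]
      refine ⟨4/(1-L'), ?_⟩
      filter_upwards [ball_mem_nhds z₀ hr₀] with z hz
      simpa using hLipγt z hz
    have htend : Filter.Tendsto γt (nhds z₀) (nhds w₀) := by
      have h0 : Filter.Tendsto (fun z : EuclideanSpace ℂ (Fin n) => z - z₀)
          (nhds z₀) (nhds 0) := by
        have h := Filter.Tendsto.sub_const
          (tendsto_id : Filter.Tendsto id (nhds z₀) (nhds z₀)) z₀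
        rw [sub_self] at h
        exact h
      have := hO.trans_tendsto h0
      rwa [tendsto_sub_nhds_zero_iff] at this
    -- derivative of β at w₀ is invertible
    have hβw₀ : DifferentiableAt ℂ β w₀ := hβd.differentiableAt (hUopen.mem_nhds hw₀U)
    have hbB : HasFDerivAt (fun x => β x - x)
        (fderiv ℂ β w₀ - ContinuousLinearMap.id ℂ (EuclideanSpace ℂ (Fin n))) w₀ :=
      hβw₀.hasFDerivAt.sub (hasFDerivAt_id w₀)
    set B := fderiv ℂ β w₀ - ContinuousLinearMap.id ℂ (EuclideanSpace ℂ (Fin n)) with hBdef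
    have hBnorm : ‖B‖ < 1 := by
      have hballw₀ : Metric.ball w₀ (δ - 3*ε) ⊆ U := by
        intro p hp
        apply hballU z₀ hz₀
        rw [mem_ball]
        calc dist p z₀ ≤ dist p w₀ + dist w₀ z₀ := dist_triangle _ _ _
          _ < (δ - 3*ε) + 3*ε :=
            add_lt_add_of_lt_of_le (mem_ball.mp hp) (mem_closedBall.mp hw₀cb)
          _ = δ := by ring
      have hcb := cauchy_fderiv_bound hUopen hbd hbC
        (show (0:ℝ) < δ - 3*ε by linarith) hballw₀
      rw [hbB.fderiv] at hcb
      calc ‖B‖ ≤ ε / (δ - 3*ε) := hcb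
        _ < 1 := (div_lt_one (by linarith)).mpr (by linarith)
    set u : (EuclideanSpace ℂ (Fin n) →L[ℂ] EuclideanSpace ℂ (Fin n))ˣ :=
      Units.oneSub (-B) (by rwa [norm_neg]) with hudef
    have huapp : ∀ x, (↑u : EuclideanSpace ℂ (Fin n) →L[ℂ] EuclideanSpace ℂ (Fin n)) x
        = x + B x := by
      intro x
      have hval : (↑u : EuclideanSpace ℂ (Fin n) →L[ℂ] EuclideanSpace ℂ (Fin n))
          = 1 - (-B) := rfl
      rw [hval, sub_neg_eq_add, ContinuousLinearMap.add_apply, ContinuousLinearMap.one_apply]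
    have hψd : DifferentiableAt ℂ (fun z => γ (α z)) z₀ :=
      (hγd.differentiableAt (hUopen.mem_nhds (hαzmem z₀ hz₀))).comp z₀
        (hαd.differentiableAt (hUopen.mem_nhds hz₀U))
    set Dψ := fderiv ℂ (fun z => γ (α z)) z₀ with hDψdef
    set A := ((↑u⁻¹ : EuclideanSpace ℂ (Fin n) →L[ℂ] EuclideanSpace ℂ (Fin n)).comp Dψ)
      with hAdef
    have hA : ∀ y, (↑u : EuclideanSpace ℂ (Fin n) →L[ℂ] EuclideanSpace ℂ (Fin n)) (A y)
        = Dψ y := by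
      intro y
      rw [hAdef, ContinuousLinearMap.comp_apply, ← ContinuousLinearMap.mul_apply,
        Units.mul_inv, ContinuousLinearMap.one_apply]
    suffices hlittle : (fun z => γt z - γt z₀ - A (z - z₀)) =o[nhds z₀]
        (fun z => z - z₀) by
      have hfd : HasFDerivAt γt A z₀ := HasFDerivAt.of_isLittleO hlittle
      exact hfd.differentiableAt
    have E1' : (fun w => (β w - w) - (β w₀ - w₀) - B (w - w₀)) =o[nhds w₀]
        (fun w => w - w₀) := hbB.isLittleO
    have E1 : (fun z => (β (γt z) - γt z) - (β w₀ - w₀) - B (γt z - w₀)) =o[nhds z₀]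
        (fun z => z - z₀) := (E1'.comp_tendsto htend).trans_isBigO hO
    have E2 : (fun z => γ (α z) - γ (α z₀) - Dψ (z - z₀)) =o[nhds z₀]
        (fun z => z - z₀) := hψd.hasFDerivAt.isLittleO
    have E4 : (fun z => (↑u⁻¹ : EuclideanSpace ℂ (Fin n) →L[ℂ] EuclideanSpace ℂ (Fin n))
        ((γ (α z) - γ (α z₀) - Dψ (z - z₀)) -
          ((β (γt z) - γt z) - (β w₀ - w₀) - B (γt z - w₀)))) =o[nhds z₀]
        (fun z => z - z₀) :=
      ((↑u⁻¹ : EuclideanSpace ℂ (Fin n) →L[ℂ] EuclideanSpace ℂ (Fin n)).isBigO_comp _ _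
        ).trans_isLittleO (E2.sub E1)
    refine Filter.EventuallyEq.trans_isLittleO ?_ E4
    filter_upwards [ball_mem_nhds z₀ hr₀] with z hz
    have hzV : z ∈ V := hr₀V hz
    have he : β (γt z) = γ (α z) := (hγt z hzV).2
    have hru : (↑u : EuclideanSpace ℂ (Fin n) →L[ℂ] EuclideanSpace ℂ (Fin n))
        (γt z - w₀ - A (z - z₀))
        = (γt z - w₀) + B (γt z - w₀) - Dψ (z - z₀) := by
      rw [map_sub, huapp, hA]
    have hXz : (γ (α z) - γ (α z₀) - Dψ (z - z₀)) -
        ((β (γt z) - γt z) - (β w₀ - w₀) - B (γt z - w₀)) =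
        (↑u : EuclideanSpace ℂ (Fin n) →L[ℂ] EuclideanSpace ℂ (Fin n))
          (γt z - w₀ - A (z - z₀)) := by
      rw [hru, ← he, ← he₀]
      abel
    show γt z - γt z₀ - A (z - z₀) = _
    rw [← hw₀def, hXz, ← ContinuousLinearMap.mul_apply, Units.inv_mul,
      ContinuousLinearMap.one_apply]
  exact ⟨γt, fun z hz => ⟨hαzmem z hz, hγtU z hz, (hγt z hz).2⟩, hinj, hdiff, hest⟩
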